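/- Let X and Y be Hausdorff spaces with X locally compact. Then X +_f Y is Hausdorff if and only if (1) f(K) = ∅ for every compact K ⊆ X, and (2) for all a, b ∈ Y with a ≠ b there exist closed sets A, B ⊆ X with A ∪ B = X, b ∉ f(A), and a ∉ f(B). -/

import Mathlib

open Set Topology

variable {X Y : Type*} [TopologicalSpace X] [TopologicalSpace Y]

/-- A map on subsets is *admissible* if it sends closed sets to closed sets,
the empty set to the empty set, and is finitely additive on closed sets. -/
def Admissible (f : Set X → Set Y) : Prop :=
  (∀ A : Set X, IsClosed A → IsClosed (f A)) ∧ f ∅ = ∅ ∧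
    ∀ A B : Set X, IsClosed A → IsClosed B → f (A ∪ B) = f A ∪ f B

/-- The defining condition for a subset of `X ⊕ Y` to be closed in the sum space `X +_f Y`. -/
def SumClosed (f : Set X → Set Y) (A : Set (X ⊕ Y)) : Prop :=
  IsClosed (Sum.inl ⁻¹' A) ∧ IsClosed (Sum.inr ⁻¹' A) ∧
    f (Sum.inl ⁻¹' A) ⊆ Sum.inr ⁻¹' A

theorem Admissible.mono {f : Set X → Set Y} (hf : Admissible f) {A B : Set X}
    (hA : IsClosed A) (hB : IsClosed B) (hAB : A ⊆ B) : f A ⊆ f B := by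
  have h := hf.2.2 A B hA hB
  rw [union_eq_right.mpr hAB] at h
  rw [h]; exact subset_union_left

/-- The sum space `X +_f Y`. -/
def sumTopology (f : Set X → Set Y) (hf : Admissible f) : TopologicalSpace (X ⊕ Y) where
  IsOpen s := SumClosed f sᶜ
  isOpen_univ := by
    refine ⟨?_, ?_, ?_⟩ <;> simp [hf.2.1]
  isOpen_inter := by
    rintro s t ⟨hs1, hs2, hs3⟩ ⟨ht1, ht2, ht3⟩
    refine ⟨?_, ?_, ?_⟩
    · simpa [compl_inter, preimage_union] using hs1.union ht1
    · simpa [compl_inter, preimage_union] using hs2.union ht2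
    · rw [compl_inter, preimage_union, preimage_union, hf.2.2 _ _ hs1 ht1]
      exact union_subset_union hs3 ht3
  isOpen_sUnion := by
    intro S hS
    have hc : (⋃₀ S)ᶜ = ⋂ s ∈ S, sᶜ := by
      rw [compl_sUnion, sInter_image]
    have h1 : IsClosed (Sum.inl ⁻¹' (⋃₀ S)ᶜ) := by
      rw [hc, preimage_iInter₂]
      exact isClosed_biInter fun s hs => (hS s hs).1
    have h2 : IsClosed (Sum.inr ⁻¹' (⋃₀ S)ᶜ) := by
      rw [hc, preimage_iInter₂]
      exact isClosed_biInter fun s hs => (hS s hs).2.1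
    refine ⟨h1, h2, ?_⟩
    rw [hc, preimage_iInter₂, preimage_iInter₂]
    refine subset_iInter₂ fun s hs => ?_
    have h1' : IsClosed (⋂ i ∈ S, Sum.inl ⁻¹' iᶜ) := by
      exact isClosed_biInter fun i hi => (hS i hi).1
    calc f (⋂ i ∈ S, Sum.inl ⁻¹' iᶜ) ⊆ f (Sum.inl ⁻¹' sᶜ) :=
          hf.mono h1' (hS s hs).1 (iInter₂_subset s hs)
      _ ⊆ Sum.inr ⁻¹' sᶜ := (hS s hs).2.2

theorem isClosed_sumTopology {f : Set X → Set Y} (hf : Admissible f) (A : Set (X ⊕ Y)) :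
    IsClosed[sumTopology f hf] A ↔ SumClosed f A := by
  rw [← @isOpen_compl_iff _ _ (sumTopology f hf)]
  show SumClosed f Aᶜᶜ ↔ _
  rw [compl_compl]

theorem isOpen_sumTopology_mk {f : Set X → Set Y} (hf : Admissible f) {U : Set X} {W : Set Y}
    (hU : IsClosed Uᶜ) (hW : IsClosed Wᶜ) (hfW : f Uᶜ ⊆ Wᶜ) :
    IsOpen[sumTopology f hf] (Sum.inl '' U ∪ Sum.inr '' W) := by
  show SumClosed f _ᶜ
  have e1 : Sum.inl ⁻¹' (Sum.inl '' U ∪ Sum.inr '' W)ᶜ = Uᶜ := by ext x; simp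
  have e2 : Sum.inr ⁻¹' (Sum.inl '' U ∪ Sum.inr '' W)ᶜ = Wᶜ := by ext y; simp
  exact ⟨e1 ▸ hU, e2 ▸ hW, by rw [e1, e2]; exact hfW⟩

theorem disjoint_sum_mk {U₁ U₂ : Set X} {W₁ W₂ : Set Y}
    (hU : Disjoint U₁ U₂) (hW : Disjoint W₁ W₂) :
    Disjoint (Sum.inl '' U₁ ∪ Sum.inr '' W₁) (Sum.inl '' U₂ ∪ Sum.inr '' W₂) := by
  rw [Set.disjoint_left]
  rintro p (⟨x, hx, rfl⟩ | ⟨y, hy, rfl⟩) (⟨x', hx', h⟩ | ⟨y', hy', h⟩) <;>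
      first
    | (cases Sum.inl.inj h; exact Set.disjoint_left.mp hU hx hx')
    | (cases Sum.inr.inj h; exact Set.disjoint_left.mp hW hy hy')
    | cases h

/-- Hausdorffness criterion for `X +_f Y`. -/
theorem statement7 [T2Space X] [T2Space Y] [LocallyCompactSpace X]
    (f : Set X → Set Y) (hf : Admissible f) :
    @T2Space _ (sumTopology f hf) ↔
      ((∀ K : Set X, IsCompact K → f K = ∅) ∧
        ∀ a b : Y, a ≠ b → ∃ A B : Set X, IsClosed A ∧ IsClosed B ∧
          A ∪ B = Set.univ ∧ b ∉ f A ∧ a ∉ f B) := by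
  constructor
  · intro hT2
    letI t : TopologicalSpace (X ⊕ Y) := sumTopology f hf
    haveI : T2Space (X ⊕ Y) := hT2
    have hcont : Continuous (Sum.inl : X → X ⊕ Y) := by
      rw [continuous_def]
      intro s hs
      have h : SumClosed f sᶜ := hs
      have h1 := h.1.isOpen_compl
      simpa using h1
    constructor
    · intro K hK
      have hKc : IsCompact (Sum.inl '' K : Set (X ⊕ Y)) := hK.image hcont
      have hcl := (isClosed_sumTopology hf _).mp hKc.isClosed
      have h3 := hcl.2.2
      have he1 : Sum.inl ⁻¹' (Sum.inl '' K : Set (X ⊕ Y)) = K :=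
        preimage_image_eq K Sum.inl_injective
      have he2 : Sum.inr ⁻¹' (Sum.inl '' K : Set (X ⊕ Y)) = (∅ : Set Y) := by
        ext y; simp
      rw [he1, he2] at h3
      exact eq_empty_iff_forall_notMem.mpr fun y hy => h3 hy
    · intro a b hab
      obtain ⟨U, V, hU, hV, haU, hbV, hUV⟩ :=
        t2_separation (show (Sum.inr a : X ⊕ Y) ≠ Sum.inr b from
          fun h => hab (Sum.inr.inj h))
      have hUc : SumClosed f Uᶜ := hU
      have hVc : SumClosed f Vᶜ := hV
      refine ⟨Sum.inl ⁻¹' Vᶜ, Sum.inl ⁻¹' Uᶜ, hVc.1, hUc.1, ?_, ?_, ?_⟩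
      · ext x
        simp only [mem_union, mem_preimage, mem_compl_iff, mem_univ, iff_true]
        by_contra h
        push_neg at h
        exact Set.disjoint_left.mp hUV h.2 h.1
      · intro hb
        exact (hVc.2.2 hb) hbV
      · intro ha
        exact (hUc.2.2 ha) haU
  · rintro ⟨h1, h2⟩
    letI t : TopologicalSpace (X ⊕ Y) := sumTopology f hf
    have sep_lr : ∀ (x : X) (y : Y), ∃ u v : Set (X ⊕ Y),
        IsOpen u ∧ IsOpen v ∧ Sum.inl x ∈ u ∧ Sum.inr y ∈ v ∧ Disjoint u v := by
      intro x y
      obtain ⟨K, hKc, hKn⟩ := exists_compact_mem_nhds x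
      refine ⟨Sum.inl '' interior K ∪ Sum.inr '' (∅ : Set Y),
        Sum.inl '' Kᶜ ∪ Sum.inr '' (univ : Set Y), ?_, ?_, ?_, ?_, ?_⟩
      · exact isOpen_sumTopology_mk hf (by simpa using isOpen_interior.isClosed_compl)
          (by simp) (by intro z hz; simp)
      · refine isOpen_sumTopology_mk hf (by simpa using hKc.isClosed) (by simp) ?_
        rw [compl_compl, h1 K hKc]
        exact empty_subset _
      · exact Or.inl ⟨x, mem_interior_iff_mem_nhds.mpr hKn, rfl⟩
      · exact Or.inr ⟨y, trivial, rfl⟩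
      · refine disjoint_sum_mk ?_ (by simp)
        rw [Set.disjoint_compl_right_iff_subset]
        exact interior_subset
    refine { t2 := ?_ }
    intro p q hpq
    obtain x | a := p <;> obtain x' | b := q
    · -- inl / inl
      obtain ⟨U, V, hU, hV, hxU, hxV, hUV⟩ :=
        t2_separation (show x ≠ x' from fun h => hpq (by rw [h]))
      refine ⟨Sum.inl '' U ∪ Sum.inr '' (∅ : Set Y), Sum.inl '' V ∪ Sum.inr '' (∅ : Set Y),
        isOpen_sumTopology_mk hf (by simpa using hU.isClosed_compl) (by simp)
          (by intro z hz; simp),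
        isOpen_sumTopology_mk hf (by simpa using hV.isClosed_compl) (by simp)
          (by intro z hz; simp),
        Or.inl ⟨x, hxU, rfl⟩, Or.inl ⟨x', hxV, rfl⟩,
        disjoint_sum_mk hUV (by simp)⟩
    · exact sep_lr x b
    · obtain ⟨u, v, hu, hv, hxu, hyv, huv⟩ := sep_lr x' a
      exact ⟨v, u, hv, hu, hyv, hxu, huv.symm⟩
    · -- inr / inr
      have hab : a ≠ b := fun h => hpq (by rw [h])
      obtain ⟨A, B, hA, hB, hABu, hbA, haB⟩ := h2 a b hab
      obtain ⟨Uy, Vy, hUy, hVy, haU, hbV, hUVy⟩ := t2_separation hab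
      refine ⟨Sum.inl '' Bᶜ ∪ Sum.inr '' (Uy \ f B), Sum.inl '' Aᶜ ∪ Sum.inr '' (Vy \ f A),
        ?_, ?_, ?_, ?_, ?_⟩
      · refine isOpen_sumTopology_mk hf (by simpa using hB) ?_ ?_
        · have : (Uy \ f B)ᶜ = Uyᶜ ∪ f B := by
            rw [diff_eq, compl_inter, compl_compl]
          rw [this]
          exact hUy.isClosed_compl.union (hf.1 B hB)
        · rw [compl_compl]
          intro z hz hmem
          exact hmem.2 hz
      · refine isOpen_sumTopology_mk hf (by simpa using hA) ?_ ?_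
        · have : (Vy \ f A)ᶜ = Vyᶜ ∪ f A := by
            rw [diff_eq, compl_inter, compl_compl]
          rw [this]
          exact hVy.isClosed_compl.union (hf.1 A hA)
        · rw [compl_compl]
          intro z hz hmem
          exact hmem.2 hz
      · exact Or.inr ⟨a, ⟨haU, haB⟩, rfl⟩
      · exact Or.inr ⟨b, ⟨hbV, hbA⟩, rfl⟩
      · refine disjoint_sum_mk ?_ ?_
        · rw [Set.disjoint_left]
          intro z hz hz'
          have : z ∈ A ∪ B := hABu ▸ mem_univ z
          rcases this with h | h
          · exact hz' h
          · exact hz h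
        · exact hUVy.mono diff_subset diff_subset
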